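/- arXiv:1211.2151 — 4 statements merged into one kernel-verified Lean document; each statement's English description precedes it below -/
import Mathlib

section
/- If a connected graph G with at least 3 vertices has a vertex u of degree 2, then G is not odometric at any vertex v ≠ u: neither edge incident to u is revealed by v, because every non-backtracking walk traversing one of these edges must traverse the other immediately after, so only the sum of the two weights can be determined. -/
open SimpleGraph

variable {V : Type*}

/-- A walk is non-backtracking if no vertex equals the vertex two steps later. -/
def NonBacktracking {G : SimpleGraph V} {u v : V} (p : G.Walk u v) : Prop :=
  ∀ i : ℕ, i + 2 < p.support.length → p.support[i]? ≠ p.support[i + 2]?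

/-- The weight of a walk: the sum of the weights of its edges, with multiplicity. -/
def walkWeight {G : SimpleGraph V} (F : Sym2 V → ℝ) {u v : V} (p : G.Walk u v) : ℝ :=
  (p.edges.map F).sum

/-- An edge `e` is revealed by a set `S` of vertices if an integer combination of weights of
closed non-backtracking walks from vertices of `S` equals a nonzero multiple of the weight
of `e`, for every weight function. -/
def RevealedBySet (G : SimpleGraph V) (S : Set V) (e : Sym2 V) : Prop :=
  ∃ (l : ℕ) (w : Fin l → V) (W : ∀ i, G.Walk (w i) (w i)) (c : Fin l → ℤ) (ce : ℤ),
    (∀ i, w i ∈ S) ∧ (∀ i, NonBacktracking (W i)) ∧ (∀ i, c i ≠ 0) ∧ ce ≠ 0 ∧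
    ∀ F : Sym2 V → ℝ, ∑ i, (c i : ℝ) * walkWeight F (W i) = (ce : ℝ) * F e

/-- A walk `W` is revealed by the vertex `v`. -/
def WalkRevealedBy (G : SimpleGraph V) (v : V) {a b : V} (W : G.Walk a b) : Prop :=
  ∃ (l : ℕ) (Ws : Fin l → G.Walk v v) (c : Fin l → ℤ) (cW : ℤ),
    (∀ i, NonBacktracking (Ws i)) ∧ (∀ i, c i ≠ 0) ∧ cW ≠ 0 ∧
    ∀ F : Sym2 V → ℝ, ∑ i, (c i : ℝ) * walkWeight F (Ws i) = (cW : ℝ) * walkWeight F W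

/-- `G` is odometric: every edge is revealed by every single vertex. -/
def Odometric (G : SimpleGraph V) : Prop :=
  ∀ v : V, ∀ e ∈ G.edgeSet, RevealedBySet G {v} e

/-- `u` is a cut vertex of `G`. -/
def IsCutVertex (G : SimpleGraph V) (u : V) : Prop :=
  G.Connected ∧ ¬ (G.induce {x : V | x ≠ u}).Connected

/-- The induced subgraph on `B` is 2-connected. -/
def TwoConnectedOn (G : SimpleGraph V) (B : Set V) : Prop :=
  3 ≤ B.ncard ∧ (G.induce B).Connected ∧ ∀ u ∈ B, (G.induce (B \ {u})).Connected

/-- `B` is a maximal 2-connected block of `G`. -/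
def IsBlock (G : SimpleGraph V) (B : Set V) : Prop :=
  TwoConnectedOn G B ∧ ∀ B', B ⊆ B' → TwoConnectedOn G B' → B' = B

private lemma nb_tail {G : SimpleGraph V} {x c y : V} (h : G.Adj x c) (q : G.Walk c y)
    (H : NonBacktracking (q.cons h)) : NonBacktracking q := by
  intro i hi
  have := H (i + 1) (by simp only [SimpleGraph.Walk.support_cons, List.length_cons]; omega)
  simpa [SimpleGraph.Walk.support_cons] using this

lemma nb_head {G : SimpleGraph V} {x c d y : V} (h : G.Adj x c) (h' : G.Adj c d)
    (q : G.Walk d y) (H : NonBacktracking ((q.cons h').cons h)) : x ≠ d := by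
  have hq0 : 0 < q.support.length := List.length_pos_iff.mpr q.support_ne_nil
  have := H 0 (by
    simp only [SimpleGraph.Walk.support_cons, List.length_cons]
    omega)
  simp only [SimpleGraph.Walk.support_cons] at this
  rw [q.support_eq_cons] at this
  simpa using this

lemma walkWeight_cons {G : SimpleGraph V} (F : Sym2 V → ℝ) {x c y : V} (h : G.Adj x c)
    (q : G.Walk c y) : walkWeight F (q.cons h) = F s(x, c) + walkWeight F q := by
  simp [walkWeight, SimpleGraph.Walk.edges_cons]

lemma key {G : SimpleGraph V} {u a b : V}
    (hall : ∀ c, G.Adj u c → c = a ∨ c = b)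
    (F : Sym2 V → ℝ)
    (h0 : ∀ e : Sym2 V, u ∉ e → F e = 0)
    (hsum : F s(u, a) + F s(u, b) = 0) :
    ∀ (n : ℕ) (x y : V) (p : G.Walk x y), p.length ≤ n → NonBacktracking p →
      x ≠ u → y ≠ u → walkWeight F p = 0 := by
  intro n
  induction n with
  | zero =>
    intro x y p hp _ _ _
    cases p with
    | nil => simp [walkWeight]
    | cons h q => simp at hp
  | succ n ih =>
    intro x y p hp hnb hx hy
    cases p with
    | nil => simp [walkWeight]
    | cons h q =>
      rename_i c
      by_cases hc : c = u
      · subst hc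
        cases q with
        | nil => exact absurd rfl hy
        | cons h' q' =>
          rename_i d
          have hxd : x ≠ d := nb_head h h' q' hnb
          have hdc : d ≠ c := fun hdc => G.irrefl (hdc ▸ h')
          have hxab := hall x h.symm
          have hdab := hall d h'
          have hq' : NonBacktracking q' := nb_tail h' q' (nb_tail h _ hnb)
          have hlen : q'.length ≤ n := by
            simp [SimpleGraph.Walk.length_cons] at hp; omega
          have hw := ih d y q' hlen hq' hdc hy
          rw [walkWeight_cons, walkWeight_cons, hw]
          have hxc : s(x, c) = s(c, x) := Sym2.eq_swap
          rw [hxc]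
          rcases hxab with hxa | hxb
          · rcases hdab with hda | hdb
            · exact absurd (hxa.trans hda.symm) hxd
            · subst hxa; subst hdb; linarith [hsum]
          · rcases hdab with hda | hdb
            · subst hxb; subst hda; linarith [hsum]
            · exact absurd (hxb.trans hdb.symm) hxd
      · have hq : NonBacktracking q := nb_tail h q hnb
        have hlen : q.length ≤ n := by
          simp [SimpleGraph.Walk.length_cons] at hp; omega
        have hw := ih c y q hlen hq hc hy
        rw [walkWeight_cons, hw, h0 s(x, c) ?_, add_zero]
        rw [Sym2.mem_iff]
        push_neg
        exact ⟨fun hu => hx hu.symm, fun hu => hc hu.symm⟩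

/-- a connected graph on at least 3 vertices with a vertex `u` of degree 2 is not
odometric at any vertex `v ≠ u`: neither edge incident to `u` is revealed by `v`. -/
theorem not_odometric_of_degree_two {G : SimpleGraph V} [Fintype V] [DecidableRel G.Adj]
    (hconn : G.Connected) (hcard : 3 ≤ Fintype.card V) (u : V) (hdeg : G.degree u = 2) :
    ∀ v : V, v ≠ u →
      (¬ ∀ e ∈ G.edgeSet, RevealedBySet G {v} e) ∧
      (∀ e ∈ G.edgeSet, u ∈ e → ¬ RevealedBySet G {v} e) := by
  classical
  intro v hv
  obtain ⟨a, b, hab, hN⟩ := Finset.card_eq_two.mp hdeg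
  have ha : G.Adj u a := by
    rw [← SimpleGraph.mem_neighborFinset, hN]; simp
  have hall : ∀ c, G.Adj u c → c = a ∨ c = b := by
    intro c hc
    have : c ∈ G.neighborFinset u := (SimpleGraph.mem_neighborFinset G u c).mpr hc
    rw [hN] at this; simpa using this
  set F : Sym2 V → ℝ := fun e => if e = s(u, a) then 1 else if e = s(u, b) then -1 else 0
    with hFdef
  have hFa : F s(u, a) = 1 := by simp [hFdef]
  have hFb : F s(u, b) = -1 := by
    have : s(u, b) ≠ s(u, a) := fun h => hab (Sym2.congr_right.mp h).symm
    simp [hFdef, this]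
  have h0 : ∀ e : Sym2 V, u ∉ e → F e = 0 := by
    intro e hue
    have h1 : e ≠ s(u, a) := fun h => hue (h ▸ Sym2.mem_mk_left u a)
    have h2 : e ≠ s(u, b) := fun h => hue (h ▸ Sym2.mem_mk_left u b)
    simp [hFdef, h1, h2]
  have hsum : F s(u, a) + F s(u, b) = 0 := by rw [hFa, hFb]; ring
  have hmain : ∀ e ∈ G.edgeSet, u ∈ e → ¬ RevealedBySet G {v} e := by
    intro e he hue hrev
    obtain ⟨l, w, W, cs, ce, hS, hNB, hc, hce, hF⟩ := hrev
    have hwv : ∀ i, w i = v := fun i => hS i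
    have hzero : ∀ i, walkWeight F (W i) = 0 := by
      intro i
      exact key hall F h0 hsum (W i).length _ _ (W i) le_rfl (hNB i)
        (by rw [hwv i]; exact hv) (by rw [hwv i]; exact hv)
    have h1 := hF F
    simp only [hzero, mul_zero, Finset.sum_const_zero] at h1
    have hFe : F e ≠ 0 := by
      induction e using Sym2.ind with
      | _ p q =>
        have hpq : G.Adj p q := (SimpleGraph.mem_edgeSet G).mp he
        rcases Sym2.mem_iff.mp hue with hp | hq
        · subst hp
          rcases hall q hpq with h | h <;> subst h
          · rw [hFa]; norm_num
          · rw [hFb]; norm_num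
        · subst hq
          have hswap : s(p, u) = s(u, p) := Sym2.eq_swap
          rw [hswap]
          rcases hall p hpq.symm with h | h <;> subst h
          · rw [hFa]; norm_num
          · rw [hFb]; norm_num
    have : (ce : ℝ) = 0 := by
      rcases mul_eq_zero.mp h1.symm with h | h
      · exact h
      · exact absurd h hFe
    exact hce (by exact_mod_cast this)
  refine ⟨?_, hmain⟩
  intro hallrev
  exact hmain s(u, a) ((SimpleGraph.mem_edgeSet G).mpr ha) (Sym2.mem_mk_left u a)
    (hallrev s(u, a) ((SimpleGraph.mem_edgeSet G).mpr ha))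
end

section
/- Let G be a connected graph with minimum degree at least 3, v a vertex of G, B a maximal 2-connected block of G, and u a cut vertex of G lying in B. Then any non-backtracking walk W from v to u is revealed by v, i.e., there are closed non-backtracking walks W_1, ..., W_l from v and nonzero integers c_W, c_1, ..., c_l such that Σ c_i F(W_i) = c_W F(W) for all edge-weight functions F. -/
open SimpleGraph

variable {V : Type*}

section NB

variable {G : SimpleGraph V} {a b c : V}

lemma support_getElem?_eq (p : G.Walk a b) :
    ∀ i, i ≤ p.length → p.support[i]? = some (p.getVert i) := by
  induction p with
  | nil =>
    intro i hi
    simp only [Walk.length_nil, Nat.le_zero] at hi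
    subst hi; simp
  | cons h q ih =>
    intro i hi
    cases i with
    | zero => simp
    | succ n =>
      rw [Walk.support_cons, List.getElem?_cons_succ, Walk.getVert_cons_succ]
      exact ih n (by simpa using hi)

lemma nb_iff (p : G.Walk a b) :
    NonBacktracking p ↔ ∀ i, i + 2 ≤ p.length → p.getVert i ≠ p.getVert (i + 2) := by
  constructor
  · intro h i hi heq
    have h2 := h i (by rw [Walk.length_support]; omega)
    rw [support_getElem?_eq p i (by omega), support_getElem?_eq p (i+2) (by omega)] at h2
    exact h2 (by rw [heq])
  · intro h i hi
    rw [Walk.length_support] at hi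
    rw [support_getElem?_eq p i (by omega), support_getElem?_eq p (i+2) (by omega)]
    simpa using h i (by omega)

lemma nb_of_length_le_one {p : G.Walk a b} (h : p.length ≤ 1) : NonBacktracking p := by
  rw [nb_iff]; intro i hi; omega

lemma nb_append {p : G.Walk a b} {q : G.Walk b c}
    (hp : NonBacktracking p) (hq : NonBacktracking q)
    (hj : 1 ≤ p.length → 1 ≤ q.length → p.getVert (p.length - 1) ≠ q.getVert 1) :
    NonBacktracking (p.append q) := by
  rw [nb_iff] at hp hq ⊢
  intro i hi
  rw [Walk.length_append] at hi
  rw [Walk.getVert_append, Walk.getVert_append]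
  split_ifs with h1 h2
  · exact hp i (by omega)
  · rcases Nat.lt_or_ge (i+2) (p.length + 1) with h3 | h3
    · have e1 : q.getVert (i + 2 - p.length) = p.getVert (i + 2) := by
        rw [show i + 2 - p.length = 0 by omega, Walk.getVert_zero,
          show i + 2 = p.length by omega, Walk.getVert_length]
      rw [e1]; exact hp i (by omega)
    · have e : i + 2 - p.length = 1 := by omega
      rw [e]
      have hres := hj (by omega) (by omega)
      rwa [show p.length - 1 = i by omega] at hres
  · omega
  · have hres := hq (i - p.length) (by omega)
    rwa [show i + 2 - p.length = i - p.length + 2 by omega]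

lemma nb_reverse {p : G.Walk a b} (hp : NonBacktracking p) : NonBacktracking p.reverse := by
  rw [nb_iff] at hp ⊢
  intro i hi
  rw [Walk.length_reverse] at hi
  rw [Walk.getVert_reverse, Walk.getVert_reverse]
  have h2 := hp (p.length - (i+2)) (by omega)
  rw [show p.length - (i+2) + 2 = p.length - i by omega] at h2
  exact fun hh => h2 hh.symm

lemma nb_of_isPath {p : G.Walk a b} (hp : p.IsPath) : NonBacktracking p := by
  rw [nb_iff]; intro i hi heq
  have hn := List.nodup_iff_getElem?_ne_getElem?.mp ((Walk.isPath_def _).mp hp)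
  exact hn i (i+2) (by omega) (by rw [Walk.length_support]; omega)
    (by rw [support_getElem?_eq _ i (by omega), support_getElem?_eq _ (i+2) (by omega), heq])

lemma isPath_getVert_inj {p : G.Walk a b} (hp : p.IsPath) {i j : ℕ}
    (hi : i ≤ p.length) (hj : j ≤ p.length) (h : p.getVert i = p.getVert j) : i = j := by
  by_contra hne
  have hn := List.nodup_iff_getElem?_ne_getElem?.mp ((Walk.isPath_def _).mp hp)
  rcases Nat.lt_or_ge i j with hlt | hge
  · exact hn i j hlt (by rw [Walk.length_support]; omega)
      (by rw [support_getElem?_eq _ _ hi, support_getElem?_eq _ _ hj, h])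
  · exact hn j i (by omega) (by rw [Walk.length_support]; omega)
      (by rw [support_getElem?_eq _ _ hj, support_getElem?_eq _ _ hi, h])

lemma getVert_mem_support (p : G.Walk a b) (i : ℕ) : p.getVert i ∈ p.support := by
  rcases le_or_gt i p.length with h | h
  · exact Walk.mem_support_iff_exists_getVert.mpr ⟨i, rfl, h⟩
  · exact Walk.mem_support_iff_exists_getVert.mpr
      ⟨p.length, by rw [Walk.getVert_length, Walk.getVert_of_length_le p (le_of_lt h)], le_refl _⟩

lemma walkWeight_append (F : Sym2 V → ℝ) (p : G.Walk a b) (q : G.Walk b c) :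
    walkWeight F (p.append q) = walkWeight F p + walkWeight F q := by
  simp [walkWeight, Walk.edges_append]

lemma walkWeight_reverse (F : Sym2 V → ℝ) (p : G.Walk a b) :
    walkWeight F p.reverse = walkWeight F p := by
  simp [walkWeight, Walk.edges_reverse, List.map_reverse, List.sum_reverse]

end NB

section Assembly

variable {G : SimpleGraph V} {v u : V}

lemma assembly {W : G.Walk v u} (hW : NonBacktracking W) (hWl : 1 ≤ W.length)
    {Z C : G.Walk u u} (hZ : NonBacktracking Z) (hC : NonBacktracking C)
    (hZl : 3 ≤ Z.length) (hCl : 3 ≤ C.length)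
    (h1 : Z.getVert 1 ≠ W.getVert (W.length - 1))
    (h2 : Z.getVert (Z.length - 1) ≠ C.getVert 1)
    (h3 : C.getVert (C.length - 1) ≠ Z.getVert 1)
    (h4 : C.getVert (C.length - 1) ≠ W.getVert (W.length - 1)) :
    WalkRevealedBy G v W := by
  have hR : NonBacktracking W.reverse := nb_reverse hW
  have hRg : W.reverse.getVert 1 = W.getVert (W.length - 1) := by
    rw [Walk.getVert_reverse]
  have hA1 : NonBacktracking (C.append W.reverse) :=
    nb_append hC hR (fun _ _ => by rw [hRg]; exact h4)
  have hA1g : (C.append W.reverse).getVert 1 = C.getVert 1 := by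
    rw [Walk.getVert_append, if_pos (by omega)]
  have hB1 : NonBacktracking (Z.append (C.append W.reverse)) :=
    nb_append hZ hA1 (fun _ _ => by rw [hA1g]; exact h2)
  have hB1g : (Z.append (C.append W.reverse)).getVert 1 = Z.getVert 1 := by
    rw [Walk.getVert_append, if_pos (by omega)]
  have hWs1 : NonBacktracking (W.append (Z.append (C.append W.reverse))) :=
    nb_append hW hB1 (fun _ _ => by rw [hB1g]; exact Ne.symm h1)
  have hB2 : NonBacktracking (C.append (Z.append (C.append W.reverse))) :=
    nb_append hC hB1 (fun _ _ => by rw [hB1g]; exact h3)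
  have hB2g : (C.append (Z.append (C.append W.reverse))).getVert 1 = C.getVert 1 := by
    rw [Walk.getVert_append, if_pos (by omega)]
  have hB3 : NonBacktracking (Z.append (C.append (Z.append (C.append W.reverse)))) :=
    nb_append hZ hB2 (fun _ _ => by rw [hB2g]; exact h2)
  have hB3g : (Z.append (C.append (Z.append (C.append W.reverse)))).getVert 1 = Z.getVert 1 := by
    rw [Walk.getVert_append, if_pos (by omega)]
  have hWs2 : NonBacktracking (W.append (Z.append (C.append (Z.append (C.append W.reverse))))) :=
    nb_append hW hB3 (fun _ _ => by rw [hB3g]; exact Ne.symm h1)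
  refine ⟨2, ![W.append (Z.append (C.append W.reverse)),
      W.append (Z.append (C.append (Z.append (C.append W.reverse))))], ![2, -1], 2,
      ?_, ?_, by norm_num, ?_⟩
  · intro i; fin_cases i
    · simpa using hWs1
    · simpa using hWs2
  · intro i; fin_cases i <;> norm_num
  · intro F
    rw [Fin.sum_univ_two]
    simp only [Matrix.cons_val_zero, Matrix.cons_val_one, Matrix.head_cons,
      walkWeight_append, walkWeight_reverse]
    push_cast
    ring

end Assembly

section Cycle

variable {G : SimpleGraph V}

lemma cycleThrough {u x y : V} (hux : G.Adj u x) (hyu : G.Adj y u)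
    {P : G.Walk x y} (hP : NonBacktracking P) (hl : 1 ≤ P.length)
    (hsup : ∀ z ∈ P.support, z ≠ u) :
    ∃ Z : G.Walk u u, NonBacktracking Z ∧ Z.length = P.length + 2 ∧
      Z.getVert 1 = x ∧ Z.getVert (Z.length - 1) = y := by
  have he2 : NonBacktracking (Walk.cons hyu (Walk.nil : G.Walk u u)) :=
    nb_of_length_le_one (by simp)
  have hinner : NonBacktracking (P.append (Walk.cons hyu Walk.nil)) :=
    nb_append hP he2 (fun _ _ => by
      have hs := hsup _ (getVert_mem_support P (P.length - 1))
      simpa using hs)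
  have hin1 : (P.append (Walk.cons hyu Walk.nil)).getVert 1 ≠ u := by
    rw [Walk.getVert_append]
    split_ifs with h
    · exact hsup _ (getVert_mem_support P 1)
    · rw [show 1 - P.length = 0 by omega, Walk.getVert_zero]
      exact hsup y (Walk.end_mem_support P)
  refine ⟨(Walk.cons hux Walk.nil).append (P.append (Walk.cons hyu Walk.nil)), ?_, ?_, ?_, ?_⟩
  · exact nb_append (nb_of_length_le_one (by simp)) hinner
      (fun _ _ => by simpa using Ne.symm hin1)
  · simp [Walk.length_append]
  · rw [Walk.getVert_append]
    simp
  · have hlen : ((Walk.cons hux Walk.nil).append (P.append (Walk.cons hyu Walk.nil))).length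
      = P.length + 2 := by simp [Walk.length_append]
    rw [hlen, Walk.getVert_append]
    rw [if_neg (by simp)]
    rw [Walk.getVert_append]
    rw [if_neg (by simp)]
    simp

end Cycle

section MapLift

variable {V' : Type*} {G : SimpleGraph V} {G' : SimpleGraph V'}

lemma getVert_map (f : G →g G') {a b : V} (p : G.Walk a b) :
    ∀ i, (p.map f).getVert i = f (p.getVert i) := by
  induction p with
  | nil =>
    intro i
    rw [Walk.map_nil, Walk.getVert_of_length_le _ (by simp), Walk.getVert_of_length_le _ (by simp)]
  | cons h q ih =>
    intro i
    cases i with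
    | zero => simp
    | succ n => rw [Walk.map_cons, Walk.getVert_cons_succ, Walk.getVert_cons_succ]; exact ih n

lemma nb_map (f : G →g G') (hf : Function.Injective f) {a b : V} {p : G.Walk a b}
    (hp : NonBacktracking p) : NonBacktracking (p.map f) := by
  rw [nb_iff] at hp ⊢
  intro i hi
  rw [Walk.length_map] at hi
  rw [getVert_map, getVert_map]
  exact fun h => hp i hi (hf h)

end MapLift

section Lollipop

variable {W' : Type*} [Fintype W'] {H : SimpleGraph W'}

lemma exists_lollipop (hdeg : ∀ z a : W', ∃ c, H.Adj z c ∧ c ≠ a) (q : W') :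
    ∃ L : H.Walk q q, NonBacktracking L ∧ 1 ≤ L.length := by
  classical
  let S : Set ℕ := {n | ∃ (z : W') (P : H.Walk q z), P.IsPath ∧ P.length = n}
  have hS0 : (0 : ℕ) ∈ S := ⟨q, Walk.nil, Walk.IsPath.nil, rfl⟩
  have hbdd : BddAbove S := ⟨Fintype.card W', by
    rintro n ⟨z, P, hP, rfl⟩
    have h2 := ((Walk.isPath_def _).mp hP).length_le_card
    rw [Walk.length_support] at h2
    omega⟩
  obtain ⟨z, P, hP, hPlen⟩ := Nat.sSup_mem ⟨0, hS0⟩ hbdd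
  have hmax : ∀ (z' : W') (P' : H.Walk q z'), P'.IsPath → P'.length ≤ P.length := by
    intro z' P' hP'
    rw [hPlen]; exact le_csSup hbdd ⟨z', P', hP', rfl⟩
  have hP1 : 1 ≤ P.length := by
    by_contra hcon
    obtain ⟨c, hc, -⟩ := hdeg q q
    have hp' : (Walk.cons hc Walk.nil : H.Walk q c).IsPath := by
      simp [Walk.isPath_def, hc.ne]
    have := hmax c _ hp'
    simp at this; omega
  obtain ⟨c, hcadj, hca⟩ := hdeg z (P.getVert (P.length - 1))
  have hcmem : c ∈ P.support := by
    by_contra hcm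
    have hpath : (P.concat hcadj).IsPath := by
      rw [Walk.isPath_def, Walk.support_concat]
      simp [List.concat_eq_append, List.nodup_append, (Walk.isPath_def _).mp hP, hcm]
      exact fun a ha h => hcm (h ▸ ha)
    have := hmax c _ hpath
    rw [Walk.length_concat] at this; omega
  obtain ⟨k, hkval, hklen⟩ := Walk.mem_support_iff_exists_getVert.mp hcmem
  have hkne : k ≠ P.length := fun h => hcadj.ne' (by rw [← hkval, h, Walk.getVert_length])
  have hkne1 : k ≠ P.length - 1 := fun h => hca (by rw [← hkval, h])
  have hk2 : k + 2 ≤ P.length := by omega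
  set pre := P.takeUntil c hcmem with hpredef
  set d := P.dropUntil c hcmem with hddef
  have hspec : pre.append d = P := Walk.take_spec P hcmem
  have hprePath : pre.IsPath := hP.takeUntil hcmem
  have hdPath : d.IsPath := hP.dropUntil hcmem
  have hlen : pre.length + d.length = P.length := by
    rw [← hspec, Walk.length_append]
  have hPg : ∀ i, P.getVert i =
      if i < pre.length then pre.getVert i else d.getVert (i - pre.length) := by
    intro i
    conv_lhs => rw [← hspec]
    rw [Walk.getVert_append]
  have hprek : pre.length = k := by
    have h1 : P.getVert pre.length = c := by
      rw [hPg pre.length, if_neg (lt_irrefl _)]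
      simp
    exact isPath_getVert_inj hP (by omega) hklen (h1.trans hkval.symm)
  have hdlen : 2 ≤ d.length := by omega
  have hd1 : d.getVert 1 = P.getVert (k + 1) := by
    rw [hPg (k + 1), if_neg (by omega), show k + 1 - pre.length = 1 by omega]
  have hzval : z = P.getVert P.length := (Walk.getVert_length P).symm
  have hpenult : 1 ≤ pre.length → pre.getVert (pre.length - 1) = P.getVert (k - 1) := by
    intro h
    rw [hPg (k - 1), if_pos (by omega), show k - 1 = pre.length - 1 by omega]
  have hne1 : 1 ≤ k → P.getVert (k - 1) ≠ P.getVert (k + 1) := by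
    intro hk1 h
    have := isPath_getVert_inj hP (by omega) (by omega) h
    omega
  have hne2 : P.getVert (k - 1) ≠ P.getVert P.length := by
    intro h
    have := isPath_getVert_inj hP (by omega) (le_refl _) h
    omega
  have hne3 : d.getVert (d.length - 1) ≠ c := by
    intro h
    have h0 : d.getVert 0 = c := Walk.getVert_zero d
    have := isPath_getVert_inj hdPath (by omega) (by omega) (h.trans h0.symm)
    omega
  -- the cycle part
  have hCynb : NonBacktracking (d.append (Walk.cons hcadj Walk.nil)) :=
    nb_append (nb_of_isPath hdPath) (nb_of_length_le_one (by simp))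
      (fun _ _ => by simpa using hne3)
  have hCylen : (d.append (Walk.cons hcadj Walk.nil)).length = d.length + 1 := by
    simp [Walk.length_append]
  have hCy1 : (d.append (Walk.cons hcadj Walk.nil)).getVert 1 = d.getVert 1 := by
    rw [Walk.getVert_append, if_pos (by omega)]
  have hCylast : (d.append (Walk.cons hcadj Walk.nil)).getVert
      ((d.append (Walk.cons hcadj Walk.nil)).length - 1) = z := by
    rw [hCylen, Nat.add_sub_cancel, Walk.getVert_append, if_neg (lt_irrefl _)]
    simp
  have hinner : NonBacktracking ((d.append (Walk.cons hcadj Walk.nil)).append pre.reverse) := by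
    refine nb_append hCynb (nb_reverse (nb_of_isPath hprePath)) (fun _ h2 => ?_)
    rw [Walk.length_reverse] at h2
    rw [hCylast, Walk.getVert_reverse, hpenult h2]
    exact fun h => hne2 (h.symm.trans hzval)
  have hinner1 : ((d.append (Walk.cons hcadj Walk.nil)).append pre.reverse).getVert 1
      = d.getVert 1 := by
    rw [Walk.getVert_append, if_pos (by omega)]
    exact hCy1
  have hLnb : NonBacktracking
      (pre.append ((d.append (Walk.cons hcadj Walk.nil)).append pre.reverse)) := by
    refine nb_append (nb_of_isPath hprePath) hinner (fun h1 _ => ?_)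
    rw [hinner1, hpenult h1, hd1]
    exact hne1 (by omega)
  refine ⟨pre.append ((d.append (Walk.cons hcadj Walk.nil)).append pre.reverse), hLnb, ?_⟩
  rw [Walk.length_append, Walk.length_append]
  omega

end Lollipop

section Plumbing

variable {G : SimpleGraph V}

lemma induce_adj' {s : Set V} {a b : ↥s} (h : G.Adj ↑a ↑b) : (G.induce s).Adj a b := h

lemma lift_reachable {s : Set V} :
    ∀ {a b : V} (w : G.Walk a b), (∀ z ∈ w.support, z ∈ s) →
      ∀ (ha : a ∈ s) (hb : b ∈ s), (G.induce s).Reachable ⟨a, ha⟩ ⟨b, hb⟩ := by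
  intro a b w
  induction w with
  | nil => intro _ ha hb; exact Reachable.refl _
  | @cons a c b h p ih =>
    intro hw ha hb
    have hc : c ∈ s := hw c (by rw [Walk.support_cons]; exact List.mem_cons_of_mem _ p.start_mem_support)
    exact ((induce_adj' h : (G.induce s).Adj ⟨a, ha⟩ ⟨c, hc⟩).reachable).trans
      (ih (fun z hz => hw z (by rw [Walk.support_cons]; exact List.mem_cons_of_mem _ hz)) hc hb)

lemma neighbor_of_connected_induce {S : Set V} (hS : (G.induce S).Connected) {a : V}
    (ha : a ∈ S) {b : V} (hb : b ∈ S) (hba : b ≠ a) : ∃ c ∈ S, G.Adj a c := by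
  obtain ⟨w⟩ := hS.preconnected ⟨a, ha⟩ ⟨b, hb⟩
  have hlen : 1 ≤ w.length := by
    by_contra h
    have h2 : (⟨a, ha⟩ : ↥S) = ⟨b, hb⟩ := Walk.eq_of_length_eq_zero (p := w) (by omega)
    exact hba (congrArg Subtype.val h2).symm
  have hadj := w.adj_getVert_succ (by omega : 0 < w.length)
  rw [Walk.getVert_zero] at hadj
  exact ⟨(w.getVert 1).1, (w.getVert 1).2, hadj⟩

lemma exists_mem_ne_of_ncard [Fintype V] {B : Set V} (h : 3 ≤ B.ncard) (s t : V) :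
    ∃ b ∈ B, b ≠ s ∧ b ≠ t := by
  by_contra hc
  push_neg at hc
  have hsub : B ⊆ {s, t} := by
    intro b hb
    rcases eq_or_ne b s with rfl | hbs
    · exact Set.mem_insert _ _
    · exact Set.mem_insert_of_mem _ (hc b hb hbs)
  have h1 := Set.ncard_le_ncard hsub (Set.toFinite _)
  have h2 : ({s, t} : Set V).ncard ≤ 2 := by
    refine le_trans (Set.ncard_insert_le _ _) ?_
    simp [Set.ncard_singleton]
  omega

lemma exists_neighbor_ne [Fintype V] [DecidableRel G.Adj] (hdeg : ∀ x, 3 ≤ G.degree x)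
    (w a b : V) : ∃ c, G.Adj w c ∧ c ≠ a ∧ c ≠ b := by
  classical
  by_contra hc
  push_neg at hc
  have hsub : G.neighborFinset w ⊆ {a, b} := by
    intro c hcmem
    rw [SimpleGraph.mem_neighborFinset] at hcmem
    rcases eq_or_ne c a with rfl | hca
    · exact Finset.mem_insert_self _ _
    · exact Finset.mem_insert_of_mem (by rw [hc c hcmem hca]; exact Finset.mem_singleton_self _)
  have h1 := Finset.card_le_card hsub
  have h2 : ({a, b} : Finset V).card ≤ 2 := (Finset.card_insert_le _ _).trans (by simp)
  have h3 := hdeg w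
  rw [← SimpleGraph.card_neighborFinset_eq_degree] at h3
  omega

end Plumbing

section Far

variable {G : SimpleGraph V}

lemma two_neighbors_in_B [Fintype V] {B : Set V}
    (hcard : 3 ≤ B.ncard) (hconn : (G.induce B).Connected)
    (hdel : ∀ w ∈ B, (G.induce (B \ {w})).Connected) {u : V} (huB : u ∈ B) :
    ∃ x y, x ∈ B ∧ y ∈ B ∧ G.Adj u x ∧ G.Adj u y ∧ x ≠ y := by
  obtain ⟨b, hbB, hbu, -⟩ := exists_mem_ne_of_ncard hcard u u
  obtain ⟨x, hxB, hux⟩ := neighbor_of_connected_induce hconn huB hbB hbu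
  obtain ⟨b2, hb2B, hb2u, hb2x⟩ := exists_mem_ne_of_ncard hcard u x
  obtain ⟨y, hyS, huy⟩ := neighbor_of_connected_induce (hdel x hxB)
    (⟨huB, by simpa using hux.ne⟩ : u ∈ B \ {x}) (⟨hb2B, by simpa using hb2x⟩ : b2 ∈ B \ {x}) hb2u
  exact ⟨x, y, hxB, hyS.1, hux, huy, Ne.symm (show y ≠ x by simpa using hyS.2)⟩

lemma exists_far_neighbor (hconn : G.Connected) {u : V}
    (hnc : ¬ (G.induce {x : V | x ≠ u}).Connected) (x' : ↥{x : V | x ≠ u}) :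
    ∃ q, G.Adj u q ∧ ∃ (hq : q ≠ u),
      ¬ (G.induce {x : V | x ≠ u}).Reachable ⟨q, hq⟩ x' := by
  classical
  have hne : Nonempty ↥{x : V | x ≠ u} := ⟨x'⟩
  have hnp : ¬ (G.induce {x : V | x ≠ u}).Preconnected := by
    haveI := hne
    exact fun h => hnc ⟨h⟩
  rw [SimpleGraph.Preconnected] at hnp
  push_neg at hnp
  obtain ⟨s, t, hst⟩ := hnp
  have key : ∀ s : ↥{x : V | x ≠ u}, ∃ n, G.Adj u n ∧ ∃ (hn : n ≠ u),
      (G.induce {x : V | x ≠ u}).Reachable s ⟨n, hn⟩ := by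
    intro s
    obtain ⟨w0⟩ := hconn.preconnected ↑s u
    have hmem : u ∈ w0.support := w0.end_mem_support
    have hcount : (w0.takeUntil u hmem).support.count u = 1 :=
      w0.count_support_takeUntil_eq_one hmem
    have hsu : (s : V) ≠ u := s.2
    obtain ⟨n, h, r, hr⟩ := Walk.exists_eq_cons_of_ne (Ne.symm hsu) (w0.takeUntil u hmem).reverse
    have hrsup : ∀ z ∈ r.support, z ≠ u := by
      intro z hz heq
      have hc1 : (w0.takeUntil u hmem).reverse.support.count u = 1 := by
        rw [Walk.support_reverse, List.count_reverse]; exact hcount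
      rw [hr, Walk.support_cons, List.count_cons_self] at hc1
      exact (List.count_eq_zero.mp (by omega)) (heq ▸ hz)
    refine ⟨n, h, h.ne', ?_⟩
    have hrr := lift_reachable (s := {x : V | x ≠ u}) r.reverse
      (by intro z hz; rw [Walk.support_reverse] at hz
          exact hrsup z (List.mem_reverse.mp hz)) hsu h.ne'
    exact hrr
  obtain ⟨ns, hnsadj, hnsne, hrs⟩ := key s
  obtain ⟨nt, hntadj, hntne, hrt⟩ := key t
  by_cases hsx : (G.induce {x : V | x ≠ u}).Reachable ⟨ns, hnsne⟩ x'
  · by_cases htx : (G.induce {x : V | x ≠ u}).Reachable ⟨nt, hntne⟩ x'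
    · exact absurd ((hrs.trans hsx).trans ((hrt.trans htx).symm)) hst
    · exact ⟨nt, hntadj, hntne, htx⟩
  · exact ⟨ns, hnsadj, hnsne, hsx⟩

end Far

/-- in a connected graph of minimum degree at least 3, any non-backtracking walk
from a vertex `v` to a cut vertex `u` of a maximal 2-connected block `B` is revealed by `v`. -/
theorem walk_to_block_cutVertex_revealed {G : SimpleGraph V} [Fintype V] [DecidableRel G.Adj]
    (hconn : G.Connected) (hdeg : ∀ x, 3 ≤ G.degree x)
    (v u : V) (B : Set V) (hB : IsBlock G B) (hu : IsCutVertex G u) (huB : u ∈ B)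
    (W : G.Walk v u) (hW : NonBacktracking W) :
    WalkRevealedBy G v W := by
  classical
  by_cases hW0 : W.length = 0
  · refine ⟨0, fun i => i.elim0, fun i => i.elim0, 1, fun i => i.elim0, fun i => i.elim0,
      one_ne_zero, ?_⟩
    intro F
    have he : W.edges = [] := List.length_eq_zero_iff.mp (by rw [Walk.length_edges, hW0])
    simp [walkWeight, he]
  · have hWl : 1 ≤ W.length := by omega
    obtain ⟨⟨hcard, hBconn, hBdel⟩, -⟩ := hB
    obtain ⟨hGconn, hHnc⟩ := hu
    obtain ⟨x, y, hxB, hyB, hux, huy, hxy⟩ := two_neighbors_in_B hcard hBconn hBdel huB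
    have hreach : ∀ (a b : V), a ∈ B → b ∈ B → ∀ (hau : a ≠ u) (hbu : b ≠ u),
        (G.induce {z : V | z ≠ u}).Reachable ⟨a, hau⟩ ⟨b, hbu⟩ := by
      intro a b ha hb hau hbu
      have hsub : B \ {u} ⊆ {z : V | z ≠ u} := fun z hz => by simpa using hz.2
      obtain ⟨w⟩ := (hBdel u huB).preconnected ⟨a, ⟨ha, by simpa using hau⟩⟩
        ⟨b, ⟨hb, by simpa using hbu⟩⟩
      exact Reachable.map (G.induceHomOfLE hsub).toHom ⟨w⟩
    set p := W.getVert (W.length - 1) with hp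
    let ι : G.induce {z : V | z ≠ u} →g G := ⟨Subtype.val, fun h => h⟩
    have hι : Function.Injective ι := Subtype.val_injective
    have buildZ : ∀ (x₀ y₀ : V) (hx₀ : G.Adj u x₀) (hy₀ : G.Adj u y₀), x₀ ≠ y₀ →
        (G.induce {z : V | z ≠ u}).Reachable ⟨x₀, hx₀.ne'⟩ ⟨y₀, hy₀.ne'⟩ →
        ∃ Z : G.Walk u u, NonBacktracking Z ∧ 3 ≤ Z.length ∧ Z.getVert 1 = x₀ ∧
          Z.getVert (Z.length - 1) = y₀ := by
      intro x₀ y₀ hx₀ hy₀ hne hr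
      obtain ⟨w0⟩ := hr
      have hPG : (w0.toPath.val.map ι).IsPath :=
        Walk.map_isPath_of_injective hι w0.toPath.2
      have hNB := nb_of_isPath hPG
      have hlen : 1 ≤ (w0.toPath.val.map ι).length := by
        by_contra hc
        exact hne (Walk.eq_of_length_eq_zero
          (p := w0.toPath.val.map ι) (by omega))
      have hsup : ∀ z ∈ (w0.toPath.val.map ι).support,
          z ≠ u := by
        intro z hz
        rw [Walk.support_map] at hz
        obtain ⟨w, -, rfl⟩ := List.mem_map.mp hz
        exact w.2
      obtain ⟨Z, h1, h2, h3, h4⟩ := cycleThrough hx₀ hy₀.symm hNB hlen hsup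
      exact ⟨Z, h1, by omega, h3, h4⟩
    by_cases hxp : x ≠ p ∧ y ≠ p
    · obtain ⟨Z, hZnb, hZl, hZ1, hZlast⟩ := buildZ x y hux huy hxy
        (hreach x y hxB hyB hux.ne' huy.ne')
      refine assembly hW hWl hZnb hZnb hZl hZl ?_ ?_ ?_ ?_
      · rw [hZ1, ← hp]; exact hxp.1
      · rw [hZ1, hZlast]; exact hxy.symm
      · rw [hZ1, hZlast]; exact hxy.symm
      · rw [hZlast, ← hp]; exact hxp.2
    · -- pick x₀ ≠ p adjacent, with partner y₀ = p
      obtain ⟨x₀, y₀, hx₀B, hy₀B, hx₀adj, hy₀adj, hx₀y₀, hx₀p, hy₀p⟩ :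
          ∃ x₀ y₀, x₀ ∈ B ∧ y₀ ∈ B ∧ G.Adj u x₀ ∧ G.Adj u y₀ ∧ x₀ ≠ y₀ ∧ x₀ ≠ p ∧ y₀ = p := by
        by_cases hxp2 : x = p
        · exact ⟨y, x, hyB, hxB, huy, hux, hxy.symm, fun h => hxy (h.trans hxp2.symm).symm, hxp2⟩
        · have hyp2 : y = p := by
            by_contra hyp2
            exact hxp ⟨hxp2, hyp2⟩
          exact ⟨x, y, hxB, hyB, hux, huy, hxy, hxp2, hyp2⟩
      obtain ⟨Z, hZnb, hZl, hZ1, hZlast⟩ := buildZ x₀ y₀ hx₀adj hy₀adj hx₀y₀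
        (hreach x₀ y₀ hx₀B hy₀B hx₀adj.ne' hy₀adj.ne')
      obtain ⟨q, hqadj, hqne, hqfar⟩ := exists_far_neighbor hGconn hHnc ⟨x₀, hx₀adj.ne'⟩
      have hqx₀ : q ≠ x₀ := by
        intro h
        exact hqfar (by rw [show (⟨q, hqne⟩ : ↥{z : V | z ≠ u}) = ⟨x₀, hx₀adj.ne'⟩ from
          Subtype.ext h])
      have hqp : q ≠ p := by
        intro h
        apply hqfar
        have : (⟨q, hqne⟩ : ↥{z : V | z ≠ u}) = ⟨y₀, hy₀adj.ne'⟩ :=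
          Subtype.ext (h.trans hy₀p.symm)
        rw [this]
        exact (hreach x₀ y₀ hx₀B hy₀B hx₀adj.ne' hy₀adj.ne').symm
      have hdeg2 : ∀ z a : ↥{z : V | z ≠ u}, ∃ c, (G.induce {z : V | z ≠ u}).Adj z c ∧ c ≠ a := by
        intro z a
        obtain ⟨c, hcadj, hcu, hca⟩ := exists_neighbor_ne hdeg ↑z u ↑a
        exact ⟨⟨c, hcu⟩, induce_adj' hcadj, fun hcc => hca (congrArg Subtype.val hcc)⟩
      obtain ⟨L, hLnb, hLlen⟩ := exists_lollipop hdeg2 ⟨q, hqne⟩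
      have hLGnb : NonBacktracking (L.map ι) := nb_map ι hι hLnb
      have hLGlen : 1 ≤ (L.map ι).length := by rw [Walk.length_map]; exact hLlen
      have hLGsup : ∀ z ∈ (L.map ι).support, z ≠ u := by
        intro z hz
        rw [Walk.support_map] at hz
        obtain ⟨w, -, rfl⟩ := List.mem_map.mp hz
        exact w.2
      obtain ⟨C, hCnb, hClen, hC1, hClast⟩ := cycleThrough hqadj hqadj.symm hLGnb hLGlen hLGsup
      refine assembly hW hWl hZnb hCnb hZl (by omega) ?_ ?_ ?_ ?_
      · rw [hZ1, ← hp]; exact hx₀p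
      · rw [hZlast, hC1, hy₀p]; exact Ne.symm hqp
      · rw [hClast, hZ1]; exact hqx₀
      · rw [hClast, ← hp]; exact hqp
end

section
/- Let G be a connected graph with minimum degree at least 3 and v any vertex. Then every bridge edge of G is revealed by v. -/
open SimpleGraph

variable {V : Type*}

namespace BridgeAux

variable {G : SimpleGraph V}





variable {G : SimpleGraph V} {u w x : V}

def NBDart {u v : V} (p : G.Walk u v) : Prop :=
  List.Chain' (fun d d' : G.Dart => d.toProd.1 ≠ d'.toProd.2) p.darts

lemma support_getElem?_fst (p : G.Walk u w) (i : ℕ) (h : i < p.darts.length) :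
    p.support[i]? = some ((p.darts[i]).toProd.1) := by
  rw [← p.map_fst_darts_append, List.getElem?_append_left (by simpa using h),
    List.getElem?_map, List.getElem?_eq_getElem h]
  rfl

lemma support_getElem?_snd (p : G.Walk u w) (i : ℕ) (h : i < p.darts.length) :
    p.support[i + 1]? = some ((p.darts[i]).toProd.2) := by
  rw [← p.cons_map_snd_darts, List.getElem?_cons_succ, List.getElem?_map,
    List.getElem?_eq_getElem h]
  rfl

lemma nonBacktracking_iff (p : G.Walk u w) : NonBacktracking p ↔ NBDart p := by
  have hls : p.support.length = p.darts.length + 1 := by simp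
  rw [NBDart, List.Chain', List.isChain_iff_getElem]
  constructor
  · intro h i hi
    have h1 : i < p.darts.length := by omega
    have h2 : i + 1 < p.darts.length := by omega
    have := h i (by omega)
    rw [support_getElem?_fst p i h1, show i + 2 = (i+1) + 1 from rfl,
      support_getElem?_snd p (i+1) h2] at this
    simp only [ne_eq, Option.some.injEq] at this
    simpa [List.get_eq_getElem] using this
  · intro h i hi
    have h1 : i < p.darts.length := by omega
    have h2 : i + 1 < p.darts.length := by omega
    rw [support_getElem?_fst p i h1, show i + 2 = (i+1) + 1 from rfl,
      support_getElem?_snd p (i+1) h2]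
    simp only [ne_eq, Option.some.injEq]
    have := h i (by omega)
    simpa [List.get_eq_getElem] using this

lemma NBDart.reverse {p : G.Walk u w} (h : NBDart p) : NBDart p.reverse := by
  rw [NBDart, List.Chain', SimpleGraph.Walk.darts_reverse, List.isChain_reverse, List.isChain_map]
  refine h.imp fun d d' hdd => ?_
  simp only [flip, Dart.symm_toProd, Prod.fst_swap, Prod.snd_swap]
  exact fun hEq => hdd hEq.symm

lemma NBDart.append {p : G.Walk u x} {q : G.Walk x w} (hp : NBDart p) (hq : NBDart q)
    (h : ∀ d ∈ p.darts.getLast?, ∀ d' ∈ q.darts.head?, d.toProd.1 ≠ d'.toProd.2) :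
    NBDart (p.append q) := by
  rw [NBDart, SimpleGraph.Walk.darts_append]; exact List.IsChain.append hp hq h

lemma NBDart.of_copy {u' w' : V} (p : G.Walk u w) (hu : u = u') (hw : w = w') (h : NBDart p) :
    NBDart (p.copy hu hw) := by rwa [NBDart, SimpleGraph.Walk.darts_copy]

lemma nbdart_of_isPath {p : G.Walk u w} (hp : p.IsPath) : NBDart p := by
  rw [← nonBacktracking_iff]
  intro i h hcontra
  have h1 : i < p.support.length := by omega
  rw [List.getElem?_eq_getElem h1, List.getElem?_eq_getElem h] at hcontra
  simp only [Option.some.injEq] at hcontra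
  have := hp.support_nodup
  have := (List.Nodup.getElem_inj_iff this).mp hcontra
  omega

open SimpleGraph

variable {G : SimpleGraph V}

def segWalk (G : SimpleGraph V) (s : ℕ → V) (hs : ∀ n, G.Adj (s n) (s (n+1))) :
    (i k : ℕ) → G.Walk (s i) (s (i + k))
  | i, 0 => SimpleGraph.Walk.nil
  | i, (k+1) => (SimpleGraph.Walk.cons (hs i) (segWalk G s hs (i+1) k)).copy rfl
      (congrArg s (by omega))

variable {s : ℕ → V} {hs : ∀ n, G.Adj (s n) (s (n+1))}

lemma segWalk_support (i k : ℕ) :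
    (segWalk G s hs i k).support = (List.range (k+1)).map (fun j => s (i + j)) := by
  induction k generalizing i with
  | zero => simp [segWalk, List.range_succ]
  | succ k ih =>
    simp only [segWalk, SimpleGraph.Walk.support_copy, SimpleGraph.Walk.support_cons, ih (i+1)]
    conv_rhs => rw [List.range_succ_eq_map]
    rw [List.map_cons, List.map_map]
    refine congrArg₂ _ rfl ?_
    exact List.map_congr_left fun j _ => congrArg s (by omega)

lemma segWalk_length (i k : ℕ) : (segWalk G s hs i k).length = k := by
  have h := congrArg List.length (segWalk_support (G := G) (s := s) (hs := hs) i k)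
  rw [SimpleGraph.Walk.length_support, List.length_map, List.length_range] at h
  omega

lemma segWalk_darts_length (i k : ℕ) : (segWalk G s hs i k).darts.length = k := by
  simp [segWalk_length]

lemma segWalk_support_getElem? (i k j : ℕ) (hj : j < k + 1) :
    (segWalk G s hs i k).support[j]? = some (s (i + j)) := by
  rw [segWalk_support, List.getElem?_map, List.getElem?_range hj]
  rfl

lemma segWalk_dart_fst (i k j : ℕ) (hj : j < k) :
    (((segWalk G s hs i k).darts[j]'(by rwa [segWalk_darts_length])).toProd.1) = s (i + j) := by
  have h1 := support_getElem?_fst (segWalk G s hs i k) j (by rwa [segWalk_darts_length])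
  rw [segWalk_support_getElem? i k j (by omega)] at h1
  exact (Option.some.injEq _ _ ▸ h1).symm

lemma segWalk_dart_snd (i k j : ℕ) (hj : j < k) :
    (((segWalk G s hs i k).darts[j]'(by rwa [segWalk_darts_length])).toProd.2) = s (i + j + 1) := by
  have h1 := support_getElem?_snd (segWalk G s hs i k) j (by rwa [segWalk_darts_length])
  rw [segWalk_support_getElem? i k (j+1) (by omega)] at h1
  have : s (i + (j+1)) = s (i + j + 1) := congrArg s (by omega)
  rw [← this]
  exact (Option.some.injEq _ _ ▸ h1).symm

lemma segWalk_nbdart (hnb : ∀ n, s n ≠ s (n+2)) (i k : ℕ) :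
    NBDart (segWalk G s hs i k) := by
  rw [NBDart, List.Chain', List.isChain_iff_getElem]
  intro j hj
  rw [segWalk_darts_length] at hj
  rw [segWalk_dart_fst i k j (by omega), segWalk_dart_snd i k (j+1) (by omega)]
  intro hEq
  exact hnb (i + j) (hEq.trans (congrArg s (by omega)))

lemma segWalk_darts_ne_nil (i k : ℕ) (hk : 0 < k) : (segWalk G s hs i k).darts ≠ [] := by
  have := segWalk_darts_length (G := G) (s := s) (hs := hs) i k
  intro h; rw [h] at this; simp at this; omega

lemma segWalk_head_snd (i k : ℕ) :
    ∀ d ∈ (segWalk G s hs i k).darts.head?, d.toProd.2 = s (i + 1) := by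
  intro d hd
  rw [List.head?_eq_getElem?] at hd
  have hk : 0 < k := by
    by_contra h
    have h0 : k = 0 := by omega
    subst h0
    have : (segWalk G s hs i 0).darts[0]? = none :=
      List.getElem?_eq_none (by rw [segWalk_darts_length])
    rw [this] at hd
    exact absurd hd (by simp)
  rw [List.getElem?_eq_getElem (by rwa [segWalk_darts_length])] at hd
  have h2 := segWalk_dart_snd (G := G) (s := s) (hs := hs) i k 0 hk
  rw [Option.mem_def, Option.some.injEq] at hd
  rw [← hd]
  simpa using h2

lemma segWalk_mem_getLast? (i k : ℕ) (d : G.Dart)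
    (hd : d ∈ (segWalk G s hs i k).darts.getLast?) :
    ∃ _ : 0 < k, d = (segWalk G s hs i k).darts[k-1]'(by rw [segWalk_darts_length]; omega) := by
  rw [List.getLast?_eq_getElem?] at hd
  have hk : 0 < k := by
    by_contra h
    have h0 : k = 0 := by omega
    subst h0
    have : (segWalk G s hs i 0).darts[(segWalk G s hs i 0).darts.length - 1]? = none :=
      List.getElem?_eq_none (by rw [segWalk_darts_length])
    rw [this] at hd
    exact absurd hd (by simp)
  rw [List.getElem?_eq_getElem (by rw [segWalk_darts_length]; omega)] at hd
  rw [Option.mem_def, Option.some.injEq] at hd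
  refine ⟨hk, ?_⟩
  rw [← hd]
  congr 1
  rw [segWalk_darts_length]

lemma segWalk_last_fst (i k : ℕ) :
    ∀ d ∈ (segWalk G s hs i k).darts.getLast?, d.toProd.1 = s (i + k - 1) := by
  intro d hd
  obtain ⟨hk, rfl⟩ := segWalk_mem_getLast? i k d hd
  rw [segWalk_dart_fst i k (k-1) (by omega)]
  exact congrArg s (by omega)

lemma segWalk_last_snd (i k : ℕ) :
    ∀ d ∈ (segWalk G s hs i k).darts.getLast?, d.toProd.2 = s (i + k) := by
  intro d hd
  obtain ⟨hk, rfl⟩ := segWalk_mem_getLast? i k d hd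
  rw [segWalk_dart_snd i k (k-1) (by omega)]
  exact congrArg s (by omega)



variable {G : SimpleGraph V}

lemma darts_reverse_head? {u w : V} (p : G.Walk u w) :
    p.reverse.darts.head? = p.darts.getLast?.map SimpleGraph.Dart.symm := by
  rw [SimpleGraph.Walk.darts_reverse, List.head?_reverse, List.getLast?_map]

lemma darts_reverse_getLast? {u w : V} (p : G.Walk u w) :
    p.reverse.darts.getLast? = p.darts.head?.map SimpleGraph.Dart.symm := by
  rw [SimpleGraph.Walk.darts_reverse, List.getLast?_reverse, List.head?_map]

lemma exists_nb_loop {H : SimpleGraph V} [Finite V] (hle : H ≤ G)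
    (h2 : ∀ x y : V, ∃ z, H.Adj x z ∧ z ≠ y) (w y : V) (hwy : H.Adj w y) :
    ∃ Z : G.Walk w w, Z.darts ≠ [] ∧ NBDart Z ∧
      (∀ d ∈ Z.darts.head?, d.toProd.2 = y) ∧
      (∀ d ∈ Z.darts.getLast?, H.Adj d.toProd.1 w) := by
  classical
  set F : V × V → V × V := fun p => (p.2, (h2 p.2 p.1).choose) with hF
  set g : ℕ → V × V := fun n => F^[n] (w, y) with hgdef
  have hg_succ : ∀ n, g (n+1) = F (g n) := by
    intro n; simp only [hgdef, Function.iterate_succ_apply']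
  have hgadj : ∀ n, H.Adj (g n).1 (g n).2 := by
    intro n; induction n with
    | zero => exact hwy
    | succ n ih => rw [hg_succ n]; exact (h2 (g n).2 (g n).1).choose_spec.1
  set s : ℕ → V := fun n => (g n).1 with hsdef
  have hs0 : s 0 = w := rfl
  have hsg : ∀ n, s (n+1) = (g n).2 := by
    intro n; simp only [hsdef, hg_succ n, hF]
  have hs1 : s 1 = y := by rw [hsg 0]; rfl
  have hsadj : ∀ n, H.Adj (s n) (s (n+1)) := fun n => by rw [hsg n]; exact hgadj n
  have hsG : ∀ n, G.Adj (s n) (s (n+1)) := fun n => hle (hsadj n)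
  have hsnb : ∀ n, s n ≠ s (n+2) := by
    intro n
    have h1 : s (n+2) ≠ s n := by
      rw [hsg (n+1), hg_succ n]
      exact (h2 (g n).2 (g n).1).choose_spec.2
    exact fun hEq => h1 hEq.symm
  obtain ⟨m0, n0, hmn, hg0⟩ := Finite.exists_ne_map_eq_of_infinite g
  obtain ⟨m, n, hlt, hgeq⟩ : ∃ m n, m < n ∧ g m = g n := by
    rcases lt_or_gt_of_ne hmn with h | h
    exacts [⟨m0, n0, h, hg0⟩, ⟨n0, m0, h, hg0.symm⟩]
  set dd := n - m with hdd
  have hdd1 : 1 ≤ dd := by omega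
  have hP : ∃ i, g i = g (i + dd) := ⟨m, by rw [show m + dd = n by omega]; exact hgeq⟩
  set i0 := Nat.find hP with hi0def
  have hi0 : g i0 = g (i0 + dd) := Nat.find_spec hP
  have hsi0 : s i0 = s (i0 + dd) := congrArg Prod.fst hi0
  have hsi0' : s (i0+1) = s (i0 + dd + 1) := by rw [hsg, hsg, hi0]
  rcases Nat.eq_zero_or_pos i0 with h0 | hpos
  · -- base case: the cycle starts at w itself
    have hclose : s (0 + dd) = w := by
      rw [← hs0]
      have := hsi0
      rw [h0] at this
      exact this.symm
    refine ⟨(segWalk G s hsG 0 dd).copy hs0 hclose, ?_, ?_, ?_, ?_⟩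
    · rw [SimpleGraph.Walk.darts_copy]
      exact segWalk_darts_ne_nil 0 dd hdd1
    · exact NBDart.of_copy _ _ _ (segWalk_nbdart hsnb 0 dd)
    · intro d hd
      rw [SimpleGraph.Walk.darts_copy] at hd
      rw [segWalk_head_snd 0 dd d hd, ← hs1]
    · intro d hd
      rw [SimpleGraph.Walk.darts_copy] at hd
      rw [segWalk_last_fst 0 dd d hd]
      have := hsadj (0 + dd - 1)
      rw [show 0 + dd - 1 + 1 = 0 + dd by omega, hclose] at this
      exact this
  · -- general case: path out to the cycle, around it, and back
    have hmin : ¬ g (i0 - 1) = g ((i0 - 1) + dd) := Nat.find_min hP (by omega)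
    have hkey : s (i0 - 1) ≠ s (i0 - 1 + dd) := by
      intro hEq
      apply hmin
      have e2 : (g (i0-1)).2 = (g (i0-1+dd)).2 := by
        rw [← hsg, ← hsg, show i0 - 1 + 1 = i0 by omega,
          show i0 - 1 + dd + 1 = i0 + dd by omega]
        exact hsi0
      exact Prod.ext hEq e2
    have hmidstart : s (i0 + dd) = s (i0 + 0) := by
      rw [← hsi0]
      exact congrArg s (by omega)
    set W1 : G.Walk w (s (0 + i0)) := (segWalk G s hsG 0 i0).copy hs0 rfl with hW1
    have hW1darts : W1.darts = (segWalk G s hsG 0 i0).darts := by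
      rw [hW1, SimpleGraph.Walk.darts_copy]
    have hW1ne : W1.darts ≠ [] := by rw [hW1darts]; exact segWalk_darts_ne_nil 0 i0 hpos
    set M : G.Walk (s (0 + i0)) (s (0 + i0)) :=
      ((segWalk G s hsG i0 dd).copy (congrArg s (by omega)) (by
        rw [show i0 + dd = i0 + dd from rfl]
        exact (congrArg s (by omega : i0 + dd = i0 + dd)).trans
          (hmidstart.trans (congrArg s (by omega))))) with hM
    have hMdarts : M.darts = (segWalk G s hsG i0 dd).darts := by
      rw [hM, SimpleGraph.Walk.darts_copy]
    have hMne : M.darts ≠ [] := by rw [hMdarts]; exact segWalk_darts_ne_nil i0 dd hdd1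
    set Z : G.Walk w w := W1.append (M.append W1.reverse) with hZ
    have hZdarts : Z.darts = W1.darts ++ (M.darts ++ W1.reverse.darts) := by
      rw [hZ, SimpleGraph.Walk.darts_append, SimpleGraph.Walk.darts_append]
    have hW1last : ∀ d ∈ W1.darts.getLast?, d.toProd.1 = s (i0 - 1) := by
      intro d hd
      rw [hW1darts] at hd
      rw [segWalk_last_fst 0 i0 d hd]
      exact congrArg s (by omega)
    have hW1head : ∀ d ∈ W1.darts.head?, d.toProd.2 = s 1 := by
      intro d hd
      rw [hW1darts] at hd
      rw [segWalk_head_snd 0 i0 d hd]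
    refine ⟨Z, ?_, ?_, ?_, ?_⟩
    · rw [hZdarts]
      simp [hW1ne]
    · rw [NBDart, hZdarts]
      refine List.IsChain.append ?_ (List.IsChain.append ?_ ?_ ?_) ?_
      · rw [hW1darts]; exact segWalk_nbdart hsnb 0 i0
      · rw [hMdarts]; exact segWalk_nbdart hsnb i0 dd
      · exact NBDart.reverse (by rw [NBDart, hW1darts]; exact segWalk_nbdart hsnb 0 i0)
      · -- junction: end of M, start of W1.reverse
        intro d hd d' hd'
        rw [hMdarts] at hd
        rw [darts_reverse_head?] at hd'
        rcases ho : W1.darts.getLast? with _ | d0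
        · rw [ho] at hd'; exact absurd hd' (by simp)
        · rw [ho] at hd'
          simp only [Option.map_some, Option.mem_def, Option.some.injEq] at hd'
          subst hd'
          rw [segWalk_last_fst i0 dd d hd]
          rw [SimpleGraph.Dart.symm_toProd, Prod.snd_swap]
          rw [hW1last d0 (by rw [ho]; rfl)]
          intro hEq
          apply hkey
          rw [show i0 - 1 + dd = i0 + dd - 1 by omega]
          exact hEq.symm
      · -- junction: end of W1, start of M ++ reverse
        intro d hd d' hd'
        rw [List.head?_append_of_ne_nil _ hMne] at hd'
        rw [hMdarts] at hd'
        rw [hW1last d hd, segWalk_head_snd i0 dd d' hd']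
        intro hEq
        exact hsnb (i0 - 1) (hEq.trans (congrArg s (by omega)))
    · intro d hd
      rw [hZdarts, List.head?_append_of_ne_nil _ hW1ne] at hd
      rw [hW1head d hd, hs1]
    · intro d hd
      have hWrne : W1.reverse.darts ≠ [] := by
        rw [SimpleGraph.Walk.darts_reverse]
        simp [hW1ne]
      rw [hZdarts, List.getLast?_append_of_ne_nil _ (fun hcon => hWrne (List.append_eq_nil_iff.mp hcon).2),
        List.getLast?_append_of_ne_nil _ hWrne, darts_reverse_getLast?] at hd
      rcases ho : W1.darts.head? with _ | d0
      · rw [ho] at hd; exact absurd hd (by simp)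
      · rw [ho] at hd
        simp only [Option.map_some, Option.mem_def, Option.some.injEq] at hd
        subst hd
        rw [SimpleGraph.Dart.symm_toProd, Prod.fst_swap, hW1head d0 (by rw [ho]; rfl), hs1]
        exact hwy.symm



variable {G : SimpleGraph V} {u w x z : V}

lemma walkWeight_append (F : Sym2 V → ℝ) (p : G.Walk u x) (q : G.Walk x w) :
    walkWeight F (p.append q) = walkWeight F p + walkWeight F q := by
  simp [walkWeight]

lemma walkWeight_reverse (F : Sym2 V → ℝ) (p : G.Walk u w) :
    walkWeight F p.reverse = walkWeight F p := by
  simp [walkWeight, List.sum_reverse]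

lemma walkWeight_cons (F : Sym2 V → ℝ) (h : G.Adj u x) (p : G.Walk x w) :
    walkWeight F (SimpleGraph.Walk.cons h p) = F s(u, x) + walkWeight F p := by
  simp [walkWeight]

lemma nbd_cons (h : G.Adj x z) (q : G.Walk z w) (hq : NBDart q)
    (hx : ∀ d ∈ q.darts.head?, d.toProd.2 ≠ x) : NBDart (SimpleGraph.Walk.cons h q) := by
  rw [NBDart, List.Chain', SimpleGraph.Walk.darts_cons, List.isChain_cons]
  exact ⟨fun d' hd' => (hx d' hd').symm, hq⟩

lemma exists_good_path {a0 v : V} (p : G.Walk a0 v) (hp : p.IsPath) (b0 : V) :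
    ∃ (a b : V), s(a, b) = s(a0, b0) ∧ ∃ P : G.Walk v a, P.IsPath ∧
      ∀ d ∈ P.darts.getLast?, d.toProd.1 ≠ b := by
  cases p with
  | nil =>
    exact ⟨a0, b0, rfl, SimpleGraph.Walk.nil, SimpleGraph.Walk.IsPath.nil, by simp⟩
  | @cons _ c _ h q =>
    by_cases hc : c = b0
    · refine ⟨c, a0, by rw [hc]; exact Sym2.eq_swap, q.reverse, (hp.of_cons).reverse, ?_⟩
      intro d hd
      rw [darts_reverse_getLast?] at hd
      rcases ho : q.darts.head? with _ | d0
      · rw [ho] at hd; exact absurd hd (by simp)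
      · rw [ho] at hd
        simp only [Option.map_some, Option.mem_def, Option.some.injEq] at hd
        subst hd
        rw [SimpleGraph.Dart.symm_toProd, Prod.fst_swap]
        have hmem : d0 ∈ q.darts := List.mem_of_mem_head? (by rw [ho]; rfl)
        have : d0.toProd.2 ∈ q.support := q.dart_snd_mem_support_of_mem_darts hmem
        have hnodup := hp.support_nodup
        rw [SimpleGraph.Walk.support_cons, List.nodup_cons] at hnodup
        exact fun hEq => hnodup.1 (hEq ▸ this)
    · refine ⟨a0, b0, rfl, (SimpleGraph.Walk.cons h q).reverse, hp.reverse, ?_⟩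
      intro d hd
      rw [darts_reverse_getLast?] at hd
      rw [SimpleGraph.Walk.darts_cons, List.head?_cons] at hd
      simp only [Option.map_some, Option.mem_def, Option.some.injEq] at hd
      subst hd
      rw [SimpleGraph.Dart.symm_toProd]
      exact hc

lemma deleteEdges_two_neighbors [Fintype V] [DecidableRel G.Adj]
    (hdeg : ∀ x, 3 ≤ G.degree x) {a b : V} (hab : G.Adj a b) :
    ∀ x y : V, ∃ z, (G.deleteEdges {s(a, b)}).Adj x z ∧ z ≠ y := by
  classical
  intro x y
  set w' : V := if x = a then b else a with hw'
  have hsub : G.neighborFinset x \ {y, w'} ⊆ G.neighborFinset x := Finset.sdiff_subset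
  have hcard : 1 ≤ (G.neighborFinset x \ {y, w'}).card := by
    have h1 := Finset.card_le_card_sdiff_add_card (s := G.neighborFinset x) (t := {y, w'})
    have h2 : ({y, w'} : Finset V).card ≤ 2 := by
      apply le_trans (Finset.card_insert_le _ _); simp
    have h3 := hdeg x
    rw [SimpleGraph.degree] at h3
    omega
  obtain ⟨z, hz⟩ := Finset.card_pos.mp hcard
  rw [Finset.mem_sdiff, SimpleGraph.mem_neighborFinset] at hz
  obtain ⟨hadj, hnot⟩ := hz
  simp only [Finset.mem_insert, Finset.mem_singleton, not_or] at hnot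
  refine ⟨z, ?_, hnot.1⟩
  rw [SimpleGraph.deleteEdges_adj]
  refine ⟨hadj, ?_⟩
  simp only [Set.mem_singleton_iff]
  intro hEq
  rw [Sym2.eq_iff] at hEq
  rcases hEq with ⟨hxa, hzb⟩ | ⟨hxb, hza⟩
  · apply hnot.2
    rw [hw', if_pos hxa, hzb]
  · apply hnot.2
    rw [hw', if_neg (by rw [hxb]; exact hab.ne'), hza]


variable {G : SimpleGraph V} {u w x z : V}

lemma head?_spec_append {p : G.Walk u x} (q : G.Walk x w) (h : p.darts ≠ [])
    {Pr : G.Dart → Prop} (hp : ∀ d ∈ p.darts.head?, Pr d) :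
    ∀ d ∈ (p.append q).darts.head?, Pr d := by
  intro d hd
  rw [SimpleGraph.Walk.darts_append, List.head?_append_of_ne_nil _ h] at hd
  exact hp d hd

lemma head?_spec_cons (h : G.Adj u x) (q : G.Walk x w) {Pr : G.Dart → Prop}
    (hPr : Pr (SimpleGraph.Dart.mk (u, x) h)) :
    ∀ d ∈ (SimpleGraph.Walk.cons h q).darts.head?, Pr d := by
  intro d hd
  rw [SimpleGraph.Walk.darts_cons, List.head?_cons, Option.mem_def, Option.some.injEq] at hd
  subst hd
  exact hPr



end BridgeAux

/-- in a connected graph of minimum degree at least 3, every bridge is revealed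
by every vertex. -/
theorem bridge_revealed {G : SimpleGraph V} [Fintype V] [DecidableRel G.Adj]
    (hconn : G.Connected) (hdeg : ∀ x, 3 ≤ G.degree x)
    (v : V) (e : Sym2 V) (hbridge : G.IsBridge e) :
    RevealedBySet G {v} e := by
  classical
  have hedge : e ∈ G.edgeSet := by
    induction e using Sym2.ind with
    | _ x y => exact G.mem_edgeSet.mpr (hbridge.reachable_iff_adj.mp (hconn.preconnected x y))
  clear hbridge
  induction e using Sym2.ind with
  | _ a0 b0 =>
  rw [SimpleGraph.mem_edgeSet] at hedge
  obtain ⟨Q0⟩ := hconn.preconnected a0 v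
  obtain ⟨a, b, hsym, P, hPpath, hPlast⟩ :=
    BridgeAux.exists_good_path Q0.toPath.1 Q0.toPath.2 b0
  have hab : G.Adj a b := by
    rw [← SimpleGraph.mem_edgeSet, hsym]
    rwa [SimpleGraph.mem_edgeSet]
  set H := G.deleteEdges {s(a, b)} with hH
  have h2 : ∀ x y : V, ∃ z, H.Adj x z ∧ z ≠ y := BridgeAux.deleteEdges_two_neighbors hdeg hab
  have hle : H ≤ G := SimpleGraph.deleteEdges_le _
  have hHa : ∀ z : V, H.Adj a z → z ≠ b := by
    intro z hz hzb
    rw [hzb, hH, SimpleGraph.deleteEdges_adj] at hz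
    exact hz.2 rfl
  have hHb : ∀ z : V, H.Adj b z → z ≠ a := by
    intro z hz hza
    rw [hza, hH, SimpleGraph.deleteEdges_adj] at hz
    exact hz.2 (by rw [Sym2.eq_swap]; rfl)
  -- the four gadget loops
  obtain ⟨z1, hz1, -⟩ := h2 b b
  obtain ⟨B1, hB1ne, hB1nb, hB1head, hB1last⟩ := BridgeAux.exists_nb_loop hle h2 b z1 hz1
  obtain ⟨dB, hdB⟩ : ∃ dB, B1.darts.getLast? = some dB := by
    rcases ho : B1.darts.getLast? with _ | d
    · exact absurd (List.getLast?_eq_none_iff.mp ho) hB1ne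
    · exact ⟨d, rfl⟩
  obtain ⟨z2, hz2, hz2ne⟩ := h2 b dB.toProd.1
  obtain ⟨B2, hB2ne, hB2nb, hB2head, hB2last⟩ := BridgeAux.exists_nb_loop hle h2 b z2 hz2
  obtain ⟨y1, hy1, -⟩ := h2 a a
  obtain ⟨A1, hA1ne, hA1nb, hA1head, hA1last⟩ := BridgeAux.exists_nb_loop hle h2 a y1 hy1
  obtain ⟨dA, hdA⟩ : ∃ dA, A1.darts.getLast? = some dA := by
    rcases ho : A1.darts.getLast? with _ | d
    · exact absurd (List.getLast?_eq_none_iff.mp ho) hA1ne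
    · exact ⟨d, rfl⟩
  obtain ⟨y2, hy2, hy2ne⟩ := h2 a dA.toProd.1
  obtain ⟨A2, hA2ne, hA2nb, hA2head, hA2last⟩ := BridgeAux.exists_nb_loop hle h2 a y2 hy2
  -- basic consequences
  have hz1a : z1 ≠ a := hHb z1 hz1
  have hz2a : z2 ≠ a := hHb z2 hz2
  have hy1b : y1 ≠ b := hHa y1 hy1
  have hy2b : y2 ≠ b := hHa y2 hy2
  have hdBa : dB.toProd.1 ≠ a := hHb dB.toProd.1 (hB1last dB hdB).symm
  have hdAb : dA.toProd.1 ≠ b := hHa dA.toProd.1 (hA1last dA hdA).symm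
  have hB2lastne : ∀ d ∈ B2.darts.getLast?, d.toProd.1 ≠ a :=
    fun d hd => hHb d.toProd.1 (hB2last d hd).symm
  have hA2lastne : ∀ d ∈ A2.darts.getLast?, d.toProd.1 ≠ b :=
    fun d hd => hHa d.toProd.1 (hA2last d hd).symm
  have nbP : BridgeAux.NBDart P := BridgeAux.nbdart_of_isPath hPpath
  have nbPr : BridgeAux.NBDart P.reverse := nbP.reverse
  have hPrhead : ∀ d ∈ P.reverse.darts.head?, d.toProd.2 ≠ b := by
    intro d hd
    rw [BridgeAux.darts_reverse_head?] at hd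
    rcases ho : P.darts.getLast? with _ | d0
    · rw [ho] at hd; exact absurd hd (by simp)
    · rw [ho] at hd
      simp only [Option.map_some, Option.mem_def, Option.some.injEq] at hd
      subst hd
      rw [SimpleGraph.Dart.symm_toProd, Prod.snd_swap]
      exact hPlast d0 (by rw [ho]; rfl)
  -- the tails
  set T1 : G.Walk b v := SimpleGraph.Walk.cons hab.symm P.reverse with hT1
  have nbT1 : BridgeAux.NBDart T1 := BridgeAux.nbd_cons _ _ nbPr hPrhead
  have hT1head : ∀ d ∈ T1.darts.head?, d.toProd.2 = a :=
    BridgeAux.head?_spec_cons hab.symm P.reverse rfl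
  set U2 : G.Walk b v := B2.append T1 with hU2
  have nbU2 : BridgeAux.NBDart U2 :=
    BridgeAux.NBDart.append hB2nb nbT1
      (fun d hd d' hd' => by rw [hT1head d' hd']; exact hB2lastne d hd)
  have hU2head : ∀ d ∈ U2.darts.head?, d.toProd.2 = z2 :=
    BridgeAux.head?_spec_append _ hB2ne hB2head
  -- W1 pieces: B1 ++ B2 ++ T1
  set U1 : G.Walk b v := B1.append U2 with hU1
  have nbU1 : BridgeAux.NBDart U1 :=
    BridgeAux.NBDart.append hB1nb nbU2
      (fun d hd d' hd' => by
        rw [hdB, Option.mem_def, Option.some.injEq] at hd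
        subst hd
        rw [hU2head d' hd']
        exact fun hEq => hz2ne hEq.symm)
  have hU1head : ∀ d ∈ U1.darts.head?, d.toProd.2 = z1 :=
    BridgeAux.head?_spec_append _ hB1ne hB1head
  set U0 : G.Walk a v := SimpleGraph.Walk.cons hab U1 with hU0
  have nbU0 : BridgeAux.NBDart U0 :=
    BridgeAux.nbd_cons _ _ nbU1 (fun d hd => by rw [hU1head d hd]; exact hz1a)
  have hU0head : ∀ d ∈ U0.darts.head?, d.toProd.2 = b :=
    BridgeAux.head?_spec_cons hab U1 rfl
  set W1 : G.Walk v v := P.append U0 with hW1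
  have nbW1 : BridgeAux.NBDart W1 :=
    BridgeAux.NBDart.append nbP nbU0
      (fun d hd d' hd' => by rw [hU0head d' hd']; exact hPlast d hd)
  -- W2/W3/W4 middle pieces
  set V1 : G.Walk a v := SimpleGraph.Walk.cons hab U2 with hV1
  have nbV1 : BridgeAux.NBDart V1 :=
    BridgeAux.nbd_cons _ _ nbU2 (fun d hd => by rw [hU2head d hd]; exact hz2a)
  have hV1head : ∀ d ∈ V1.darts.head?, d.toProd.2 = b :=
    BridgeAux.head?_spec_cons hab U2 rfl
  -- A-part followed by V1, three variants
  set V2 : G.Walk a v := A1.append V1 with hV2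
  have nbV2 : BridgeAux.NBDart V2 :=
    BridgeAux.NBDart.append hA1nb nbV1
      (fun d hd d' hd' => by
        rw [hdA, Option.mem_def, Option.some.injEq] at hd
        subst hd
        rw [hV1head d' hd']
        exact hdAb)
  have hV2head : ∀ d ∈ V2.darts.head?, d.toProd.2 = y1 :=
    BridgeAux.head?_spec_append _ hA1ne hA1head
  set V2' : G.Walk a v := A2.append V1 with hV2'
  have nbV2' : BridgeAux.NBDart V2' :=
    BridgeAux.NBDart.append hA2nb nbV1
      (fun d hd d' hd' => by rw [hV1head d' hd']; exact hA2lastne d hd)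
  have hV2'head : ∀ d ∈ V2'.darts.head?, d.toProd.2 = y2 :=
    BridgeAux.head?_spec_append _ hA2ne hA2head
  set V2'' : G.Walk a v := A1.append V2' with hV2''
  have nbV2'' : BridgeAux.NBDart V2'' :=
    BridgeAux.NBDart.append hA1nb nbV2'
      (fun d hd d' hd' => by
        rw [hdA, Option.mem_def, Option.some.injEq] at hd
        subst hd
        rw [hV2'head d' hd']
        exact fun hEq => hy2ne hEq.symm)
  have hV2''head : ∀ d ∈ V2''.darts.head?, d.toProd.2 = y1 :=
    BridgeAux.head?_spec_append _ hA1ne hA1head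
  -- assemble the upper part: P ++ (a→b) ++ B1 ++ (b→a) ++ [Apart] ++ V1-chain
  -- generic builder facts for X ∈ {V2, V2', V2''} with head value y ≠ b
  set V3 : G.Walk b v := SimpleGraph.Walk.cons hab.symm V2 with hV3
  have nbV3 : BridgeAux.NBDart V3 :=
    BridgeAux.nbd_cons _ _ nbV2 (fun d hd => by rw [hV2head d hd]; exact hy1b)
  have hV3head : ∀ d ∈ V3.darts.head?, d.toProd.2 = a :=
    BridgeAux.head?_spec_cons hab.symm V2 rfl
  set V3' : G.Walk b v := SimpleGraph.Walk.cons hab.symm V2' with hV3'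
  have nbV3' : BridgeAux.NBDart V3' :=
    BridgeAux.nbd_cons _ _ nbV2' (fun d hd => by rw [hV2'head d hd]; exact hy2b)
  have hV3'head : ∀ d ∈ V3'.darts.head?, d.toProd.2 = a :=
    BridgeAux.head?_spec_cons hab.symm V2' rfl
  set V3'' : G.Walk b v := SimpleGraph.Walk.cons hab.symm V2'' with hV3''
  have nbV3'' : BridgeAux.NBDart V3'' :=
    BridgeAux.nbd_cons _ _ nbV2'' (fun d hd => by rw [hV2''head d hd]; exact hy1b)
  have hV3''head : ∀ d ∈ V3''.darts.head?, d.toProd.2 = a :=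
    BridgeAux.head?_spec_cons hab.symm V2'' rfl
  set V4 : G.Walk b v := B1.append V3 with hV4
  have nbV4 : BridgeAux.NBDart V4 :=
    BridgeAux.NBDart.append hB1nb nbV3
      (fun d hd d' hd' => by
        rw [hdB, Option.mem_def, Option.some.injEq] at hd
        subst hd
        rw [hV3head d' hd']
        exact hdBa)
  have hV4head : ∀ d ∈ V4.darts.head?, d.toProd.2 = z1 :=
    BridgeAux.head?_spec_append _ hB1ne hB1head
  set V4' : G.Walk b v := B1.append V3' with hV4'
  have nbV4' : BridgeAux.NBDart V4' :=
    BridgeAux.NBDart.append hB1nb nbV3'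
      (fun d hd d' hd' => by
        rw [hdB, Option.mem_def, Option.some.injEq] at hd
        subst hd
        rw [hV3'head d' hd']
        exact hdBa)
  have hV4'head : ∀ d ∈ V4'.darts.head?, d.toProd.2 = z1 :=
    BridgeAux.head?_spec_append _ hB1ne hB1head
  set V4'' : G.Walk b v := B1.append V3'' with hV4''
  have nbV4'' : BridgeAux.NBDart V4'' :=
    BridgeAux.NBDart.append hB1nb nbV3''
      (fun d hd d' hd' => by
        rw [hdB, Option.mem_def, Option.some.injEq] at hd
        subst hd
        rw [hV3''head d' hd']
        exact hdBa)
  have hV4''head : ∀ d ∈ V4''.darts.head?, d.toProd.2 = z1 :=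
    BridgeAux.head?_spec_append _ hB1ne hB1head
  set V5 : G.Walk a v := SimpleGraph.Walk.cons hab V4 with hV5
  have nbV5 : BridgeAux.NBDart V5 :=
    BridgeAux.nbd_cons _ _ nbV4 (fun d hd => by rw [hV4head d hd]; exact hz1a)
  have hV5head : ∀ d ∈ V5.darts.head?, d.toProd.2 = b :=
    BridgeAux.head?_spec_cons hab V4 rfl
  set V5' : G.Walk a v := SimpleGraph.Walk.cons hab V4' with hV5'
  have nbV5' : BridgeAux.NBDart V5' :=
    BridgeAux.nbd_cons _ _ nbV4' (fun d hd => by rw [hV4'head d hd]; exact hz1a)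
  have hV5'head : ∀ d ∈ V5'.darts.head?, d.toProd.2 = b :=
    BridgeAux.head?_spec_cons hab V4' rfl
  set V5'' : G.Walk a v := SimpleGraph.Walk.cons hab V4'' with hV5''
  have nbV5'' : BridgeAux.NBDart V5'' :=
    BridgeAux.nbd_cons _ _ nbV4'' (fun d hd => by rw [hV4''head d hd]; exact hz1a)
  have hV5''head : ∀ d ∈ V5''.darts.head?, d.toProd.2 = b :=
    BridgeAux.head?_spec_cons hab V4'' rfl
  set W2 : G.Walk v v := P.append V5 with hW2
  have nbW2 : BridgeAux.NBDart W2 :=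
    BridgeAux.NBDart.append nbP nbV5
      (fun d hd d' hd' => by rw [hV5head d' hd']; exact hPlast d hd)
  set W3 : G.Walk v v := P.append V5' with hW3
  have nbW3 : BridgeAux.NBDart W3 :=
    BridgeAux.NBDart.append nbP nbV5'
      (fun d hd d' hd' => by rw [hV5'head d' hd']; exact hPlast d hd)
  set W4 : G.Walk v v := P.append V5'' with hW4
  have nbW4 : BridgeAux.NBDart W4 :=
    BridgeAux.NBDart.append nbP nbV5''
      (fun d hd d' hd' => by rw [hV5''head d' hd']; exact hPlast d hd)
  -- weights
  have hswap : s(b, a) = s(a, b) := Sym2.eq_swap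
  have weq1 : ∀ F : Sym2 V → ℝ, walkWeight F W1 =
      2 * walkWeight F P + 2 * F s(a, b) + walkWeight F B1 + walkWeight F B2 := by
    intro F
    simp only [hW1, hU0, hU1, hU2, hT1, BridgeAux.walkWeight_append, BridgeAux.walkWeight_cons,
      BridgeAux.walkWeight_reverse, hswap]
    ring
  have weq2 : ∀ F : Sym2 V → ℝ, walkWeight F W2 =
      2 * walkWeight F P + 4 * F s(a, b) + walkWeight F B1 + walkWeight F B2
        + walkWeight F A1 := by
    intro F
    simp only [hW2, hV5, hV4, hV3, hV2, hV1, hU2, hT1, BridgeAux.walkWeight_append,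
      BridgeAux.walkWeight_cons, BridgeAux.walkWeight_reverse, hswap]
    ring
  have weq3 : ∀ F : Sym2 V → ℝ, walkWeight F W3 =
      2 * walkWeight F P + 4 * F s(a, b) + walkWeight F B1 + walkWeight F B2
        + walkWeight F A2 := by
    intro F
    simp only [hW3, hV5', hV4', hV3', hV2', hV1, hU2, hT1, BridgeAux.walkWeight_append,
      BridgeAux.walkWeight_cons, BridgeAux.walkWeight_reverse, hswap]
    ring
  have weq4 : ∀ F : Sym2 V → ℝ, walkWeight F W4 =
      2 * walkWeight F P + 4 * F s(a, b) + walkWeight F B1 + walkWeight F B2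
        + walkWeight F A1 + walkWeight F A2 := by
    intro F
    simp only [hW4, hV5'', hV4'', hV3'', hV2'', hV2', hV1, hU2, hT1,
      BridgeAux.walkWeight_append, BridgeAux.walkWeight_cons,
      BridgeAux.walkWeight_reverse, hswap]
    ring
  refine ⟨4, fun _ => v, ![W1, W2, W3, W4], ![-1, 1, 1, -1], 2, fun i => rfl, ?_, ?_, by
    norm_num, ?_⟩
  · intro i
    fin_cases i <;>
      simp only [Matrix.cons_val_zero, Matrix.cons_val_one, Matrix.head_cons,
        Matrix.cons_val_two, Matrix.tail_cons, Matrix.cons_val_three] <;>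
      rw [BridgeAux.nonBacktracking_iff]
    exacts [nbW1, nbW2, nbW3, nbW4]
  · intro i
    fin_cases i <;> norm_num
  · intro F
    rw [Fin.sum_univ_four]
    simp only [Matrix.cons_val_zero, Matrix.cons_val_one, Matrix.head_cons,
      Matrix.cons_val_two, Matrix.tail_cons, Matrix.cons_val_three]
    rw [weq1 F, weq2 F, weq3 F, weq4 F, ← hsym]
    push_cast
    ring
end

section
/- Let G be a graph, v a vertex, and u a neighbor of v. If the edge f = {u,v} is revealed by v, then the set of edges revealed by {u,v} equals the set of edges revealed by v alone: O_{{u,v}} = O_v. -/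
open SimpleGraph

variable {V : Type*}

def NoBT' (l : List V) : Prop := ∀ i : ℕ, i + 2 < l.length → l[i]? ≠ l[i + 2]?

lemma nonBacktracking_iff {G : SimpleGraph V} {a b : V} (p : G.Walk a b) :
    NonBacktracking p ↔ NoBT' p.support := Iff.rfl

lemma getElem?_append_left' {l₁ l₂ : List V} {i : ℕ} (h : i < l₁.length) :
    (l₁ ++ l₂)[i]? = l₁[i]? := by rw [List.getElem?_append, if_pos h]

lemma NoBT'.of_cons {a : V} {l : List V} (h : NoBT' (a :: l)) : NoBT' l := by
  intro i hi
  have := h (i + 1) (by simp; omega)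
  simpa using this

lemma NoBT'.of_concat {a : V} {l : List V} (h : NoBT' (l ++ [a])) : NoBT' l := by
  intro i hi
  have h2 := h i (by simp; omega)
  rwa [getElem?_append_left' (by omega), getElem?_append_left' (by omega)] at h2

lemma NoBT'.cons {a : V} {l : List V} (h : NoBT' l) (ha : l[1]? ≠ some a) :
    NoBT' (a :: l) := by
  intro i hi
  match i with
  | 0 => simpa using (Ne.symm ha)
  | i + 1 =>
    have := h i (by simp at hi; omega)
    simpa using this

lemma NoBT'.concat {a : V} {l : List V} (h : NoBT' l) (ha : l[l.length - 2]? ≠ some a) :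
    NoBT' (l ++ [a]) := by
  intro i hi
  simp only [List.length_append, List.length_singleton] at hi
  rcases lt_or_eq_of_le (Nat.lt_succ_iff.mp hi) with h1 | h1
  · rw [getElem?_append_left' (by omega), getElem?_append_left' h1]
    exact h i h1
  · rw [getElem?_append_left' (by omega)]
    have e2 : (l ++ [a])[i + 2]? = some a := h1 ▸ (List.getElem?_concat_length : (l ++ [a])[l.length]? = some a)
    rw [e2]
    have : l[i]? = l[l.length - 2]? := by congr 1; omega
    rw [this]; exact ha

lemma support_head' {G : SimpleGraph V} {a b : V} (p : G.Walk a b) : p.support[0]? = some a := by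
  cases p <;> simp

lemma support_last' {G : SimpleGraph V} {a b : V} (p : G.Walk a b) :
    p.support[p.support.length - 1]? = some b := by
  rw [← List.getLast?_eq_getElem?, List.getLast?_eq_getLast p.support_ne_nil,
    p.getLast_support]

lemma nonBacktracking_copy {G : SimpleGraph V} {a b a' b' : V} (p : G.Walk a b)
    (h1 : a = a') (h2 : b = b') :
    NonBacktracking (p.copy h1 h2) ↔ NonBacktracking p := by
  rw [nonBacktracking_iff, nonBacktracking_iff, SimpleGraph.Walk.support_copy]

@[simp] lemma walkWeight_copy {G : SimpleGraph V} (F : Sym2 V → ℝ) {a b a' b' : V}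
    (p : G.Walk a b) (h1 : a = a') (h2 : b = b') :
    walkWeight F (p.copy h1 h2) = walkWeight F p := by
  simp [walkWeight]

lemma key_transform {G : SimpleGraph V} {u v : V} (huv : G.Adj u v) (W : G.Walk u u)
    (hW : NonBacktracking W) :
    ∃ (W' : G.Walk v v) (d : ℤ), NonBacktracking W' ∧
      ∀ F : Sym2 V → ℝ, walkWeight F W = walkWeight F W' + (d : ℝ) * F s(u, v) := by
  cases W with
  | nil =>
    refine ⟨.nil, 0, ?_, ?_⟩
    · intro i hi; simp at hi
    · intro F; simp [walkWeight]
  | cons h₁ P =>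
    rename_i x
    cases P with
    | nil => exact absurd rfl h₁.ne
    | cons h' P' =>
      obtain ⟨y, M, h₂, hPe⟩ := SimpleGraph.Walk.exists_cons_eq_concat h' P'
      rw [hPe] at hW ⊢
      have hn : 1 ≤ M.support.length := List.length_pos_iff.mpr M.support_ne_nil
      have hW' : NoBT' (u :: (M.support ++ [u])) := by
        rw [nonBacktracking_iff] at hW
        simpa using hW
      have hx' : M.support[0]? = some x := support_head' M
      have hy' : M.support[M.support.length - 1]? = some y := support_last' M
      by_cases hx : x = v
      · by_cases hy : y = v
        · -- case D: drop first and last edges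
          refine ⟨M.copy hx hy, 2, ?_, ?_⟩
          · rw [nonBacktracking_copy, nonBacktracking_iff]
            exact (hW'.of_cons).of_concat
          · intro F
            have hs : (s(y, u) : Sym2 V) = s(u, v) := by rw [hy, Sym2.eq_swap]
            simp only [walkWeight_copy, walkWeight, SimpleGraph.Walk.edges_copy,
              SimpleGraph.Walk.edges_cons,
              SimpleGraph.Walk.edges_concat, List.concat_eq_append, List.map_append,
              List.sum_append, List.map_cons, List.sum_cons, List.map_nil, List.sum_nil, hs, hx]
            push_cast; ring
        · -- case B: x = v, y ≠ v : rotate first edge to the end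
          refine ⟨((M.concat h₂).concat huv).copy hx rfl, 0, ?_, ?_⟩
          · rw [nonBacktracking_copy, nonBacktracking_iff]
            have h3 : NoBT' (M.support ++ [u]) := hW'.of_cons
            have h4 : NoBT' ((M.support ++ [u]) ++ [v]) := by
              refine h3.concat ?_
              have hl : (M.support ++ [u]).length - 2 = M.support.length - 1 := by
                simp only [List.length_append, List.length_singleton]; omega
              rw [hl, getElem?_append_left' (by omega), hy']
              simpa using hy
            simpa using h4
          · intro F
            simp only [walkWeight_copy, walkWeight, SimpleGraph.Walk.edges_copy,
              SimpleGraph.Walk.edges_cons,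
              SimpleGraph.Walk.edges_concat, List.concat_eq_append, List.map_append,
              List.sum_append, List.map_cons, List.sum_cons, List.map_nil, List.sum_nil, hx]
            push_cast; ring
      · by_cases hy : y = v
        · -- case C: y = v, x ≠ v : rotate last edge to the front
          refine ⟨.cons huv.symm (.cons h₁ (M.copy rfl hy)), 0, ?_, ?_⟩
          · rw [nonBacktracking_iff]
            have h3 : NoBT' ((u :: M.support) ++ [u]) := by simpa using hW'
            have h4 : NoBT' (u :: M.support) := h3.of_concat
            have h5 : NoBT' (v :: (u :: M.support)) := by
              refine h4.cons ?_
              simp only [List.getElem?_cons_succ, hx']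
              simpa using hx
            simpa using h5
          · intro F
            have hs : (s(y, u) : Sym2 V) = s(u, v) := by rw [hy, Sym2.eq_swap]
            have hs2 : (s(v, u) : Sym2 V) = s(u, v) := Sym2.eq_swap
            simp only [walkWeight_copy, walkWeight, SimpleGraph.Walk.edges_cons,
              SimpleGraph.Walk.edges_concat, SimpleGraph.Walk.edges_copy,
              List.concat_eq_append, List.map_append,
              List.sum_append, List.map_cons, List.sum_cons, List.map_nil, List.sum_nil, hs, hs2]
            push_cast; ring
        · -- case A: conjugate
          refine ⟨.cons huv.symm ((SimpleGraph.Walk.cons h₁ (M.concat h₂)).concat huv),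
            -2, ?_, ?_⟩
          · rw [nonBacktracking_iff]
            have h3 : NoBT' ((u :: (M.support ++ [u])) ++ [v]) := by
              refine hW'.concat ?_
              have hl : (u :: (M.support ++ [u])).length - 2 = M.support.length := by
                simp only [List.length_cons, List.length_append, List.length_singleton, List.length_nil]; omega
              rw [hl]
              obtain ⟨k, hk⟩ : ∃ k, M.support.length = k + 1 := ⟨M.support.length - 1, by omega⟩
              have e1 : (u :: (M.support ++ [u]))[M.support.length]? = M.support[k]? := by
                rw [hk, List.getElem?_cons_succ, getElem?_append_left' (by omega)]
              rw [e1, show M.support[k]? = M.support[M.support.length - 1]? by congr 1; omega, hy']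
              simpa using hy
            have h4 : NoBT' (v :: ((u :: (M.support ++ [u])) ++ [v])) := by
              refine h3.cons ?_
              rw [getElem?_append_left' (by simp), List.getElem?_cons_succ,
                getElem?_append_left' (by omega), hx']
              simpa using hx
            simpa using h4
          · intro F
            have hs2 : (s(v, u) : Sym2 V) = s(u, v) := Sym2.eq_swap
            simp only [walkWeight, SimpleGraph.Walk.edges_cons, SimpleGraph.Walk.edges_concat,
              List.concat_eq_append, List.map_append, List.sum_append, List.map_cons,
              List.sum_cons, List.map_nil, List.sum_nil, hs2]
            push_cast; ring

/-- if `u` is a neighbor of `v` and the edge `{u,v}` is revealed by `v`, then the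
edges revealed by `{u,v}` are exactly the edges revealed by `v`. -/
theorem revealed_pair_eq_of_edge_revealed {G : SimpleGraph V} (u v : V) (huv : G.Adj u v)
    (hf : RevealedBySet G {v} s(u, v)) :
    ∀ e : Sym2 V, RevealedBySet G {u, v} e ↔ RevealedBySet G {v} e := by
  intro e
  constructor
  · rintro ⟨l, w, Wk, c, ce, hw, hNB, hc, hce, hsum⟩
    have hstep : ∀ i, ∃ (W' : G.Walk v v) (d : ℤ), NonBacktracking W' ∧
        ∀ F : Sym2 V → ℝ, walkWeight F (Wk i) = walkWeight F W' + (d : ℝ) * F s(u, v) := by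
      intro i
      rcases Set.mem_insert_iff.mp (hw i) with h | h
      · obtain ⟨W', d, h1, h2⟩ := key_transform huv ((Wk i).copy h h)
          ((nonBacktracking_copy _ h h).mpr (hNB i))
        exact ⟨W', d, h1, fun F => by rw [← walkWeight_copy F (Wk i) h h]; exact h2 F⟩
      · have h' : w i = v := h
        exact ⟨(Wk i).copy h' h', 0, (nonBacktracking_copy _ h' h').mpr (hNB i),
          fun F => by simp⟩
    choose W' d hNB' hEq using hstep
    set D : ℤ := ∑ i, c i * d i with hD'
    have hkey : ∀ F : Sym2 V → ℝ,
        ∑ i, (c i : ℝ) * walkWeight F (W' i) = (ce : ℝ) * F e - (D : ℝ) * F s(u, v) := by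
      intro F
      have h1 : ∀ i ∈ Finset.univ, (c i : ℝ) * walkWeight F (W' i)
          = (c i : ℝ) * walkWeight F (Wk i) - ((c i * d i : ℤ) : ℝ) * F s(u, v) := by
        intro i _
        rw [hEq i F]; push_cast; ring
      rw [Finset.sum_congr rfl h1, Finset.sum_sub_distrib, hsum F, ← Finset.sum_mul]
      push_cast [hD']; ring
    obtain ⟨m, y, Y, b, bf, hy, hNBY, hb, hbf, hsumY⟩ := hf
    by_cases hD : D = 0
    · refine ⟨l, fun _ => v, W', c, ce, fun i => rfl, hNB', hc, hce, fun F => ?_⟩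
      rw [hkey F, hD]; push_cast; ring
    · refine ⟨l + m, fun _ => v,
        Fin.addCases (fun i => W' i) (fun j => (Y j).copy (hy j) (hy j)),
        Fin.addCases (fun i => bf * c i) (fun j => D * b j), bf * ce,
        fun i => rfl, ?_, ?_, mul_ne_zero hbf hce, ?_⟩
      · intro i
        refine i.addCases (fun i => ?_) (fun j => ?_)
        · simpa only [Fin.addCases_left] using hNB' i
        · simp only [Fin.addCases_right]
          exact (nonBacktracking_copy _ _ _).mpr (hNBY j)
      · intro i
        refine i.addCases (fun i => ?_) (fun j => ?_)
        · simpa only [Fin.addCases_left] using mul_ne_zero hbf (hc i)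
        · simpa only [Fin.addCases_right] using mul_ne_zero hD (hb j)
      · intro F
        rw [Fin.sum_univ_add]
        simp only [Fin.addCases_left, Fin.addCases_right, walkWeight_copy]
        have e1 : ∑ i, ((bf * c i : ℤ) : ℝ) * walkWeight F (W' i)
            = (bf : ℝ) * ((ce : ℝ) * F e - (D : ℝ) * F s(u, v)) := by
          rw [← hkey F, Finset.mul_sum]
          refine Finset.sum_congr rfl fun i _ => ?_
          push_cast; ring
        have e2 : ∑ j, ((D * b j : ℤ) : ℝ) * walkWeight F (Y j)
            = (D : ℝ) * ((bf : ℝ) * F s(u, v)) := by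
          rw [← hsumY F, Finset.mul_sum]
          refine Finset.sum_congr rfl fun j _ => ?_
          push_cast; ring
        rw [e1, show (∑ j, ((D * b j : ℤ) : ℝ) * walkWeight F ((Y j).copy (hy j) (hy j))) = _ from
          (Finset.sum_congr rfl fun j _ => congrArg (fun t => ((D * b j : ℤ) : ℝ) * t) (walkWeight_copy F (Y j) (hy j) (hy j))).trans e2]; push_cast; ring
  · rintro ⟨l, w, Wk, c, ce, hw, hNB, hc, hce, hsum⟩
    exact ⟨l, w, Wk, c, ce, fun i => Set.mem_insert_iff.mpr (Or.inr (hw i)),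
      hNB, hc, hce, hsum⟩
end
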